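/- There exists a sequence {X_k}_{k≥0} of m×m matrices with X₀ = 0 such that, for every k ≥ 0, the matrix equation X = Σ_{ℓ=−1}^q A_ℓ(X_k) X^{ℓ+1} has a minimal nonnegative solution and X_{k+1} equals it. Moreover this sequence satisfies 0 ≤ X_k ≤ X_{k+1} and X_{k+1}·1 ≤ 1 entrywise for all k ≥ 0, and X_k converges entrywise, as k → ∞, to the minimal nonnegative solution G of X = Σ_{i=0}^∞ A_{i−1} Xⁱ. -/

import Mathlib

open Matrix

/-- Entrywise order on square real matrices. -/
def Mle {m : ℕ} (X Y : Matrix (Fin m) (Fin m) ℝ) : Prop := ∀ i j, X i j ≤ Y i j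

/-- `G` is the minimal nonnegative solution of `X = ∑_{i=0}^∞ A_{i-1} Xⁱ`
(`A i` denotes `A_{i-1}` of the paper). -/
def IsMinSol {m : ℕ} (A : ℕ → Matrix (Fin m) (Fin m) ℝ)
    (G : Matrix (Fin m) (Fin m) ℝ) : Prop :=
  Mle 0 G ∧ Summable (fun i => A i * G ^ i) ∧ G = ∑' i, A i * G ^ i ∧
    ∀ Y, Mle 0 Y → Summable (fun i => A i * Y ^ i) → Y = ∑' i, A i * Y ^ i → Mle G Y

/-- `Z` is the minimal nonnegative solution of the polynomial matrix equation
`Z = ∑_{ℓ=-1}^q C_ℓ Z^{ℓ+1}`, written with the shifted index `ℓ+1 ∈ {0,…,p}`,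
`p = q+1`. -/
def IsMinPolySol {m : ℕ} (p : ℕ) (C : ℕ → Matrix (Fin m) (Fin m) ℝ)
    (Z : Matrix (Fin m) (Fin m) ℝ) : Prop :=
  Mle 0 Z ∧ Z = ∑ ℓ ∈ Finset.range (p + 1), C ℓ * Z ^ ℓ ∧
    ∀ Y, Mle 0 Y → Y = ∑ ℓ ∈ Finset.range (p + 1), C ℓ * Y ^ ℓ → Mle Z Y

namespace Stmt2

variable {m : ℕ}

lemma mle0 {X : Matrix (Fin m) (Fin m) ℝ} (h : Mle 0 X) (i j : Fin m) : 0 ≤ X i j := by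
  simpa using h i j

lemma mle_of0 {X : Matrix (Fin m) (Fin m) ℝ} (h : ∀ i j, 0 ≤ X i j) : Mle 0 X := by
  intro i j; simpa using h i j

lemma mle_trans {X Y Z : Matrix (Fin m) (Fin m) ℝ} (h1 : Mle X Y) (h2 : Mle Y Z) : Mle X Z :=
  fun i j => le_trans (h1 i j) (h2 i j)

lemma mle_zero_mul {X Y : Matrix (Fin m) (Fin m) ℝ} (hX : Mle 0 X) (hY : Mle 0 Y) :
    Mle 0 (X * Y) := by
  apply mle_of0; intro i j
  rw [Matrix.mul_apply]
  exact Finset.sum_nonneg fun k _ => mul_nonneg (mle0 hX i k) (mle0 hY k j)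

lemma mle_mul {X Y Z W : Matrix (Fin m) (Fin m) ℝ} (hX : Mle 0 X) (hXY : Mle X Y)
    (hZ : Mle 0 Z) (hZW : Mle Z W) : Mle (X * Z) (Y * W) := by
  intro i j
  rw [Matrix.mul_apply, Matrix.mul_apply]
  apply Finset.sum_le_sum
  intro k _
  exact mul_le_mul (hXY i k) (hZW k j) (mle0 hZ k j) (le_trans (mle0 hX i k) (hXY i k))

lemma mle_zero_one : Mle 0 (1 : Matrix (Fin m) (Fin m) ℝ) := by
  apply mle_of0; intro i j
  rw [Matrix.one_apply]
  split <;> norm_num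

lemma mle_zero_pow {X : Matrix (Fin m) (Fin m) ℝ} (hX : Mle 0 X) (n : ℕ) : Mle 0 (X ^ n) := by
  induction n with
  | zero => simpa using mle_zero_one
  | succ n ih => rw [pow_succ]; exact mle_zero_mul ih hX

lemma mle_pow {X Y : Matrix (Fin m) (Fin m) ℝ} (hX : Mle 0 X) (hXY : Mle X Y) (n : ℕ) :
    Mle (X ^ n) (Y ^ n) := by
  induction n with
  | zero => intro i j; simp
  | succ n ih => rw [pow_succ, pow_succ]; exact mle_mul (mle_zero_pow hX n) ih hX hXY

lemma mle_zero_sum {s : Finset ℕ} {f : ℕ → Matrix (Fin m) (Fin m) ℝ}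
    (h : ∀ i ∈ s, Mle 0 (f i)) : Mle 0 (∑ i ∈ s, f i) := by
  apply mle_of0; intro r c
  rw [Matrix.sum_apply]
  exact Finset.sum_nonneg fun i hi => mle0 (h i hi) r c

lemma mle_sum {s : Finset ℕ} {f g : ℕ → Matrix (Fin m) (Fin m) ℝ}
    (h : ∀ i ∈ s, Mle (f i) (g i)) : Mle (∑ i ∈ s, f i) (∑ i ∈ s, g i) := by
  intro r c
  rw [Matrix.sum_apply, Matrix.sum_apply]
  exact Finset.sum_le_sum fun i hi => h i hi r c

/-- entries of a nonneg matrix with row sums ≤ 1 are ≤ 1 -/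
lemma entry_le_one {X : Matrix (Fin m) (Fin m) ℝ} (hX : Mle 0 X)
    (hrs : ∀ r, ∑ c, X r c ≤ 1) (r c : Fin m) : X r c ≤ 1 :=
  le_trans (Finset.single_le_sum (fun k _ => mle0 hX r k) (Finset.mem_univ c)) (hrs r)

lemma rs_mul {X Y : Matrix (Fin m) (Fin m) ℝ} (hX : Mle 0 X) (hY : Mle 0 Y)
    (hrsY : ∀ r, ∑ c, Y r c ≤ 1) (r : Fin m) : ∑ c, (X * Y) r c ≤ ∑ c, X r c := by
  have : ∑ c, (X * Y) r c = ∑ k, X r k * ∑ c, Y k c := by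
    simp only [Matrix.mul_apply, Finset.mul_sum]
    rw [Finset.sum_comm]
  rw [this]
  calc ∑ k, X r k * ∑ c, Y k c ≤ ∑ k, X r k * 1 :=
        Finset.sum_le_sum fun k _ => mul_le_mul_of_nonneg_left (hrsY k) (mle0 hX r k)
    _ = ∑ c, X r c := by simp

lemma rs_pow {X : Matrix (Fin m) (Fin m) ℝ} (hX : Mle 0 X)
    (hrs : ∀ r, ∑ c, X r c ≤ 1) (n : ℕ) (r : Fin m) : ∑ c, (X ^ n) r c ≤ 1 := by
  induction n with
  | zero => simp [Matrix.one_apply]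
  | succ n ih =>
      rw [pow_succ]
      exact le_trans (rs_mul (mle_zero_pow hX n) hX hrs r) (ih)

lemma summable_entry {f : ℕ → Matrix (Fin m) (Fin m) ℝ} (h : Summable f) (r c : Fin m) :
    Summable fun i => f i r c := Pi.summable.mp (Pi.summable.mp h r) c

lemma summable_of_entries {f : ℕ → Matrix (Fin m) (Fin m) ℝ}
    (h : ∀ r c, Summable fun i => f i r c) : Summable f := by
  exact Pi.summable.mpr fun r => Pi.summable.mpr fun c => h r c

lemma tsum_entry {f : ℕ → Matrix (Fin m) (Fin m) ℝ} (h : Summable f) (r c : Fin m) :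
    (∑' i, f i) r c = ∑' i, f i r c := by
  exact (congrFun (tsum_apply h (x := r)) c).trans (tsum_apply (Pi.summable.mp h r))

lemma tsum_mle {f g : ℕ → Matrix (Fin m) (Fin m) ℝ} (hf : Summable f) (hg : Summable g)
    (h : ∀ i, Mle (f i) (g i)) : Mle (∑' i, f i) (∑' i, g i) := by
  intro r c
  rw [tsum_entry hf, tsum_entry hg]
  exact Summable.tsum_le_tsum (fun i => h i r c) (summable_entry hf r c) (summable_entry hg r c)

lemma tsum_mle0 {f : ℕ → Matrix (Fin m) (Fin m) ℝ} (hf : Summable f)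
    (h : ∀ i, Mle 0 (f i)) : Mle 0 (∑' i, f i) := by
  apply mle_of0; intro r c
  rw [tsum_entry hf]
  exact tsum_nonneg fun i => mle0 (h i) r c

lemma tsum_shift (f : ℕ → ℝ) (ℓ : ℕ) :
    ∑' i, f i = ∑' j, (if ℓ ≤ j then f (j - ℓ) else 0) := by
  have hinj : Function.Injective (fun i : ℕ => i + ℓ) := fun a b hab => by simpa using hab
  have h0 : (Function.support fun j => if ℓ ≤ j then f (j - ℓ) else 0) ⊆
      Set.range fun i : ℕ => i + ℓ := by
    intro x hx
    rcases le_or_gt ℓ x with h | h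
    · exact ⟨x - ℓ, by simp only []; omega⟩
    · exact absurd (if_neg (by omega)) hx
  have := hinj.tsum_eq (f := fun j => if ℓ ≤ j then f (j - ℓ) else 0) h0
  rw [← this]; simp

lemma summable_shift {f : ℕ → ℝ} (ℓ : ℕ)
    (h : Summable fun j => if ℓ ≤ j then f (j - ℓ) else 0) : Summable f := by
  have hinj : Function.Injective (fun i : ℕ => i + ℓ) := fun a b hab => by simpa using hab
  have h0 : ∀ x ∉ Set.range (fun i : ℕ => i + ℓ), (if ℓ ≤ x then f (x - ℓ) else 0) = 0 := by
    intro x hx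
    rw [if_neg]
    intro hj
    exact hx (Set.mem_range.mpr ⟨x - ℓ, Nat.sub_add_cancel hj⟩)
  have := (hinj.summable_iff h0).mpr h
  refine this.congr fun i => ?_
  show (if ℓ ≤ i + ℓ then f (i + ℓ - ℓ) else 0) = f i
  simp

end Stmt2

namespace Stmt2

variable {m : ℕ}

noncomputable def Pmap (p : ℕ) (C : ℕ → Matrix (Fin m) (Fin m) ℝ)
    (Z : Matrix (Fin m) (Fin m) ℝ) : Matrix (Fin m) (Fin m) ℝ :=
  ∑ ℓ ∈ Finset.range (p + 1), C ℓ * Z ^ ℓ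

noncomputable def iterSeq (p : ℕ) (C : ℕ → Matrix (Fin m) (Fin m) ℝ) :
    ℕ → Matrix (Fin m) (Fin m) ℝ
  | 0 => 0
  | (j+1) => Pmap p C (iterSeq p C j)

variable {p : ℕ} {C C' : ℕ → Matrix (Fin m) (Fin m) ℝ}

lemma Pmap_nonneg (hC : ∀ ℓ, Mle 0 (C ℓ)) {Z : Matrix (Fin m) (Fin m) ℝ} (hZ : Mle 0 Z) :
    Mle 0 (Pmap p C Z) :=
  mle_zero_sum fun ℓ _ => mle_zero_mul (hC ℓ) (mle_zero_pow hZ ℓ)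

lemma Pmap_mono (hC : ∀ ℓ, Mle 0 (C ℓ)) {Z W : Matrix (Fin m) (Fin m) ℝ}
    (hZ : Mle 0 Z) (hZW : Mle Z W) : Mle (Pmap p C Z) (Pmap p C W) :=
  mle_sum fun ℓ _ => mle_mul (hC ℓ) (fun i j => le_refl _) (mle_zero_pow hZ ℓ) (mle_pow hZ hZW ℓ)

lemma Pmap_monoC (hC : ∀ ℓ, Mle 0 (C ℓ)) (hle : ∀ ℓ, Mle (C ℓ) (C' ℓ))
    {Z : Matrix (Fin m) (Fin m) ℝ} (hZ : Mle 0 Z) : Mle (Pmap p C Z) (Pmap p C' Z) :=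
  mle_sum fun ℓ _ => mle_mul (hC ℓ) (hle ℓ) (mle_zero_pow hZ ℓ) (fun i j => le_refl _)

lemma Pmap_rs (hC : ∀ ℓ, Mle 0 (C ℓ))
    (hCrow : ∀ r, ∑ ℓ ∈ Finset.range (p + 1), ∑ c, C ℓ r c ≤ 1)
    {Z : Matrix (Fin m) (Fin m) ℝ} (hZ : Mle 0 Z) (hZrow : ∀ r, ∑ c, Z r c ≤ 1)
    (r : Fin m) : ∑ c, Pmap p C Z r c ≤ 1 := by
  have h1 : ∑ c, Pmap p C Z r c = ∑ ℓ ∈ Finset.range (p + 1), ∑ c, (C ℓ * Z ^ ℓ) r c := by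
    unfold Pmap
    simp only [Matrix.sum_apply]
    rw [Finset.sum_comm]
  rw [h1]
  refine le_trans (Finset.sum_le_sum fun ℓ _ => ?_) (hCrow r)
  exact rs_mul (hC ℓ) (mle_zero_pow hZ ℓ) (rs_pow hZ hZrow ℓ) r

lemma iter_nonneg (hC : ∀ ℓ, Mle 0 (C ℓ)) (j : ℕ) : Mle 0 (iterSeq p C j) := by
  induction j with
  | zero => exact fun i j => le_refl _
  | succ j ih => exact Pmap_nonneg hC ih

lemma iter_rs (hC : ∀ ℓ, Mle 0 (C ℓ))
    (hCrow : ∀ r, ∑ ℓ ∈ Finset.range (p + 1), ∑ c, C ℓ r c ≤ 1) (j : ℕ) (r : Fin m) :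
    ∑ c, iterSeq p C j r c ≤ 1 := by
  induction j generalizing r with
  | zero =>
      show ∑ c, (0 : Matrix (Fin m) (Fin m) ℝ) r c ≤ 1
      simp
  | succ j ih => exact Pmap_rs hC hCrow (iter_nonneg hC j) (fun r => ih r) r

lemma iter_mono (hC : ∀ ℓ, Mle 0 (C ℓ)) (j : ℕ) :
    Mle (iterSeq p C j) (iterSeq p C (j + 1)) := by
  induction j with
  | zero => exact Pmap_nonneg hC (iter_nonneg hC 0)
  | succ j ih => exact Pmap_mono hC (iter_nonneg hC j) ih

lemma iter_le_super (hC : ∀ ℓ, Mle 0 (C ℓ)) {W : Matrix (Fin m) (Fin m) ℝ}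
    (hW0 : Mle 0 W) (hsup : Mle (Pmap p C W) W) (j : ℕ) : Mle (iterSeq p C j) W := by
  induction j with
  | zero => exact hW0
  | succ j ih => exact mle_trans (Pmap_mono hC (iter_nonneg hC j) ih) hsup

lemma iter_monoC (hC : ∀ ℓ, Mle 0 (C ℓ)) (hC' : ∀ ℓ, Mle 0 (C' ℓ))
    (hle : ∀ ℓ, Mle (C ℓ) (C' ℓ)) (j : ℕ) : Mle (iterSeq p C j) (iterSeq p C' j) := by
  induction j with
  | zero => exact fun i j => le_refl _
  | succ j ih =>
      refine mle_trans (Pmap_mono hC (iter_nonneg hC j) ih) ?_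
      exact Pmap_monoC hC hle (iter_nonneg hC' j)

noncomputable def minSol (p : ℕ) (C : ℕ → Matrix (Fin m) (Fin m) ℝ) :
    Matrix (Fin m) (Fin m) ℝ :=
  Matrix.of fun r c => ⨆ j, iterSeq p C j r c

lemma iter_bdd (hC : ∀ ℓ, Mle 0 (C ℓ))
    (hCrow : ∀ r, ∑ ℓ ∈ Finset.range (p + 1), ∑ c, C ℓ r c ≤ 1) (r c : Fin m) :
    BddAbove (Set.range fun j => iterSeq p C j r c) := by
  refine ⟨1, ?_⟩
  rintro x ⟨j, rfl⟩
  exact entry_le_one (iter_nonneg hC j) (iter_rs hC hCrow j) r c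

lemma iter_mono_nat (hC : ∀ ℓ, Mle 0 (C ℓ)) (r c : Fin m) :
    Monotone fun j => iterSeq p C j r c :=
  monotone_nat_of_le_succ fun j => iter_mono hC j r c

lemma tendsto_entry_minSol (hC : ∀ ℓ, Mle 0 (C ℓ))
    (hCrow : ∀ r, ∑ ℓ ∈ Finset.range (p + 1), ∑ c, C ℓ r c ≤ 1) (r c : Fin m) :
    Filter.Tendsto (fun j => iterSeq p C j r c) Filter.atTop (nhds (minSol p C r c)) :=
  tendsto_atTop_ciSup (iter_mono_nat hC r c) (iter_bdd hC hCrow r c)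

lemma tendsto_minSol (hC : ∀ ℓ, Mle 0 (C ℓ))
    (hCrow : ∀ r, ∑ ℓ ∈ Finset.range (p + 1), ∑ c, C ℓ r c ≤ 1) :
    Filter.Tendsto (iterSeq p C) Filter.atTop (nhds (minSol p C)) := by
  exact tendsto_pi_nhds.mpr fun r => tendsto_pi_nhds.mpr fun c =>
    tendsto_entry_minSol hC hCrow r c

lemma iter_le_minSol (hC : ∀ ℓ, Mle 0 (C ℓ))
    (hCrow : ∀ r, ∑ ℓ ∈ Finset.range (p + 1), ∑ c, C ℓ r c ≤ 1) (j : ℕ) :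
    Mle (iterSeq p C j) (minSol p C) := fun r c =>
  le_ciSup (iter_bdd hC hCrow r c) j

lemma minSol_nonneg (hC : ∀ ℓ, Mle 0 (C ℓ))
    (hCrow : ∀ r, ∑ ℓ ∈ Finset.range (p + 1), ∑ c, C ℓ r c ≤ 1) :
    Mle 0 (minSol p C) :=
  mle_trans (iter_nonneg hC 0) (iter_le_minSol hC hCrow 0)

lemma minSol_le (hC : ∀ ℓ, Mle 0 (C ℓ)) {W : Matrix (Fin m) (Fin m) ℝ}
    (h : ∀ j, Mle (iterSeq p C j) W) : Mle (minSol p C) W := fun r c =>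
  ciSup_le fun j => h j r c

lemma minSol_rs (hC : ∀ ℓ, Mle 0 (C ℓ))
    (hCrow : ∀ r, ∑ ℓ ∈ Finset.range (p + 1), ∑ c, C ℓ r c ≤ 1) (r : Fin m) :
    ∑ c, minSol p C r c ≤ 1 := by
  have ht : Filter.Tendsto (fun j => ∑ c, iterSeq p C j r c) Filter.atTop
      (nhds (∑ c, minSol p C r c)) :=
    tendsto_finset_sum _ fun c _ => tendsto_entry_minSol hC hCrow r c
  exact le_of_tendsto ht (Filter.Eventually.of_forall fun j => iter_rs hC hCrow j r)

lemma Pmap_continuous : Continuous (Pmap p C) :=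
  continuous_finset_sum _ fun ℓ _ => continuous_const.mul (continuous_pow ℓ)

lemma minSol_fix (hC : ∀ ℓ, Mle 0 (C ℓ))
    (hCrow : ∀ r, ∑ ℓ ∈ Finset.range (p + 1), ∑ c, C ℓ r c ≤ 1) :
    minSol p C = Pmap p C (minSol p C) := by
  have h1 : Filter.Tendsto (fun j => iterSeq p C (j + 1)) Filter.atTop (nhds (minSol p C)) :=
    (tendsto_minSol hC hCrow).comp (Filter.tendsto_add_atTop_nat 1)
  have h2 : Filter.Tendsto (fun j => Pmap p C (iterSeq p C j)) Filter.atTop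
      (nhds (Pmap p C (minSol p C))) :=
    (Pmap_continuous.tendsto _).comp (tendsto_minSol hC hCrow)
  exact tendsto_nhds_unique h1 h2

lemma minSol_le_super (hC : ∀ ℓ, Mle 0 (C ℓ)) {W : Matrix (Fin m) (Fin m) ℝ}
    (hW0 : Mle 0 W) (hsup : Mle (Pmap p C W) W) : Mle (minSol p C) W :=
  minSol_le hC fun j => iter_le_super hC hW0 hsup j

lemma minSol_monoC (hC : ∀ ℓ, Mle 0 (C ℓ)) (hC' : ∀ ℓ, Mle 0 (C' ℓ))
    (hC'row : ∀ r, ∑ ℓ ∈ Finset.range (p + 1), ∑ c, C' ℓ r c ≤ 1)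
    (hle : ∀ ℓ, Mle (C ℓ) (C' ℓ)) : Mle (minSol p C) (minSol p C') :=
  minSol_le hC fun j => mle_trans (iter_monoC hC hC' hle j) (iter_le_minSol hC' hC'row j)

lemma minSol_isMinPolySol (hC : ∀ ℓ, Mle 0 (C ℓ))
    (hCrow : ∀ r, ∑ ℓ ∈ Finset.range (p + 1), ∑ c, C ℓ r c ≤ 1) :
    IsMinPolySol p C (minSol p C) := by
  refine ⟨minSol_nonneg hC hCrow, minSol_fix hC hCrow, ?_⟩
  intro Y hY0 hYeq
  refine minSol_le_super hC hY0 ?_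
  intro i j
  exact le_of_eq (congrFun (congrFun hYeq.symm i) j)

end Stmt2

namespace Stmt2

variable {m : ℕ}

lemma ite_app (P : Prop) [Decidable P] (M N : Matrix (Fin m) (Fin m) ℝ) (r c : Fin m) :
    (if P then M else N) r c = if P then M r c else N r c := by split <;> rfl

section WithA

variable {p : ℕ} {A : ℕ → Matrix (Fin m) (Fin m) ℝ} {Al : ℕ → ℕ → Matrix (Fin m) (Fin m) ℝ}

/-- summability of `A i * X^i` for substochastic `X` -/
lemma summable_mul_pow (hA0 : ∀ i, Mle 0 (A i)) (hsum : Summable A)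
    {X : Matrix (Fin m) (Fin m) ℝ} (hX : Mle 0 X) (hXr : ∀ r, ∑ c, X r c ≤ 1) :
    Summable fun i => A i * X ^ i := by
  apply summable_of_entries
  intro r c
  have hmaj : Summable fun i => ∑ k, A i r k :=
    summable_sum fun k _ => summable_entry hsum r k
  refine Summable.of_nonneg_of_le (fun i => mle0 (mle_zero_mul (hA0 i) (mle_zero_pow hX i)) r c)
    (fun i => ?_) hmaj
  rw [Matrix.mul_apply]
  calc ∑ k, A i r k * (X ^ i) k c ≤ ∑ k, A i r k * 1 := by
        refine Finset.sum_le_sum fun k _ => ?_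
        exact mul_le_mul_of_nonneg_left
          (entry_le_one (mle_zero_pow hX i) (rs_pow hX hXr i) k c) (mle0 (hA0 i) r k)
    _ = ∑ k, A i r k := by simp

lemma summable_rowsum (hsum : Summable A) (r : Fin m) :
    Summable fun i => ∑ c, A i r c :=
  summable_sum fun c _ => summable_entry hsum r c

/-- row sums of `∑' i, A i * X^i` are at most those of `∑' i, A i` rows -/
lemma phi_rs (hA0 : ∀ i, Mle 0 (A i)) (hsum : Summable A)
    (hrow : ∀ k, ∑ j, (∑' i, A i) k j ≤ 1)
    {X : Matrix (Fin m) (Fin m) ℝ} (hX : Mle 0 X) (hXr : ∀ r, ∑ c, X r c ≤ 1)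
    (r : Fin m) : ∑ c, (∑' i, A i * X ^ i) r c ≤ 1 := by
  have hs := summable_mul_pow hA0 hsum hX hXr
  have h1 : ∑ c, (∑' i, A i * X ^ i) r c = ∑' i, ∑ c, (A i * X ^ i) r c := by
    rw [Finset.sum_congr rfl (fun c _ => tsum_entry hs r c)]
    exact (Summable.tsum_finsetSum fun c _ => summable_entry hs r c).symm
  rw [h1]
  have h2 : ∑' i, ∑ c, (A i * X ^ i) r c ≤ ∑' i, ∑ c, A i r c := by
    refine Summable.tsum_le_tsum (fun i => rs_mul (hA0 i) (mle_zero_pow hX i) (rs_pow hX hXr i) r)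
      ?_ (summable_rowsum hsum r)
    exact summable_sum fun c _ => summable_entry hs r c
  refine le_trans h2 ?_
  have h3 : ∑' i, ∑ c, A i r c = ∑ c, (∑' i, A i) r c := by
    rw [Finset.sum_congr rfl (fun c _ => tsum_entry hsum r c)]
    exact Summable.tsum_finsetSum fun c _ => summable_entry hsum r c
  rw [h3]
  exact hrow r

lemma ite_nonneg (hAℓ0 : ∀ ℓ i, Mle 0 (Al ℓ i)) (ℓ j : ℕ) :
    Mle 0 (if ℓ ≤ j then Al ℓ (j - ℓ) else 0) := by
  split
  · exact hAℓ0 ℓ (j - ℓ)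
  · exact fun i j => le_refl _

lemma ite_le_A
    (hcompat : ∀ i, A i = ∑ ℓ ∈ Finset.range (p + 1),
      if ℓ ≤ i then Al ℓ (i - ℓ) else 0)
    (hAℓ0 : ∀ ℓ i, Mle 0 (Al ℓ i))
    {ℓ : ℕ} (hℓ : ℓ ∈ Finset.range (p + 1)) (j : ℕ) :
    Mle (if ℓ ≤ j then Al ℓ (j - ℓ) else 0) (A j) := by
  intro r c
  rw [hcompat j, Matrix.sum_apply]
  exact Finset.single_le_sum (f := fun ℓ' => (if ℓ' ≤ j then Al ℓ' (j - ℓ') else 0) r c)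
    (fun ℓ' _ => mle0 (ite_nonneg hAℓ0 ℓ' j) r c) hℓ

end WithA

end Stmt2

namespace Stmt2

variable {m : ℕ} {p : ℕ} {A : ℕ → Matrix (Fin m) (Fin m) ℝ}
  {Al : ℕ → ℕ → Matrix (Fin m) (Fin m) ℝ}

/-- the fundamental rearrangement:
`∑_{ℓ≤p} (∑'_i Aℓ_{ℓ,i} X^i) X^ℓ = ∑'_j A_j X^j` for substochastic `X`. -/
lemma rearrange (hA0 : ∀ i, Mle 0 (A i)) (hAℓ0 : ∀ ℓ i, Mle 0 (Al ℓ i))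
    (hsum : Summable A)
    (hcompat : ∀ i, A i = ∑ ℓ ∈ Finset.range (p + 1),
      if ℓ ≤ i then Al ℓ (i - ℓ) else 0)
    {X : Matrix (Fin m) (Fin m) ℝ} (hX : Mle 0 X) (hXr : ∀ r, ∑ c, X r c ≤ 1)
    (hAfX : ∀ ℓ, Summable fun i => Al ℓ i * X ^ i) :
    ∑ ℓ ∈ Finset.range (p + 1), (∑' i, Al ℓ i * X ^ i) * X ^ ℓ = ∑' i, A i * X ^ i := by
  have hsA : Summable fun i => A i * X ^ i := summable_mul_pow hA0 hsum hX hXr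
  ext r c
  have key : ∀ ℓ ∈ Finset.range (p + 1),
      ((∑' i, Al ℓ i * X ^ i) * X ^ ℓ) r c
        = ∑' j, ((if ℓ ≤ j then Al ℓ (j - ℓ) else 0) * X ^ j) r c := by
    intro ℓ _
    have hsℓ := hAfX ℓ
    calc ((∑' i, Al ℓ i * X ^ i) * X ^ ℓ) r c
        = ∑ k, (∑' i, (Al ℓ i * X ^ i) r k) * (X ^ ℓ) k c := by
          rw [Matrix.mul_apply]
          exact Finset.sum_congr rfl fun k _ => by rw [tsum_entry hsℓ]
      _ = ∑ k, ∑' i, (Al ℓ i * X ^ i) r k * (X ^ ℓ) k c :=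
          Finset.sum_congr rfl fun k _ => tsum_mul_right.symm
      _ = ∑' i, ∑ k, (Al ℓ i * X ^ i) r k * (X ^ ℓ) k c :=
          (Summable.tsum_finsetSum fun k _ => (summable_entry hsℓ r k).mul_right _).symm
      _ = ∑' i, (Al ℓ i * X ^ (i + ℓ)) r c := by
          refine tsum_congr fun i => ?_
          rw [← Matrix.mul_apply, pow_add, ← mul_assoc]
      _ = ∑' j, (if ℓ ≤ j then (Al ℓ (j - ℓ) * X ^ (j - ℓ + ℓ)) r c else 0) :=
          tsum_shift _ ℓ
      _ = ∑' j, ((if ℓ ≤ j then Al ℓ (j - ℓ) else 0) * X ^ j) r c := by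
          refine tsum_congr fun j => ?_
          by_cases h : ℓ ≤ j
          · rw [if_pos h, if_pos h, Nat.sub_add_cancel h]
          · rw [if_neg h, if_neg h, Matrix.zero_mul, Matrix.zero_apply]
  have hg : ∀ ℓ ∈ Finset.range (p + 1),
      Summable fun j => ((if ℓ ≤ j then Al ℓ (j - ℓ) else 0) * X ^ j) r c := by
    intro ℓ hℓ
    refine Summable.of_nonneg_of_le
      (fun j => mle0 (mle_zero_mul (ite_nonneg hAℓ0 ℓ j) (mle_zero_pow hX j)) r c)
      (fun j => ?_) (summable_entry hsA r c)
    exact mle_mul (ite_nonneg hAℓ0 ℓ j) (ite_le_A hcompat hAℓ0 hℓ j)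
      (mle_zero_pow hX j) (fun _ _ => le_refl _) r c
  rw [Matrix.sum_apply, Finset.sum_congr rfl key, ← Summable.tsum_finsetSum hg, tsum_entry hsA]
  refine tsum_congr fun j => ?_
  rw [← Matrix.sum_apply, ← Finset.sum_mul, ← hcompat j]

/-- row sums of the coefficients `Cof X ℓ` sum to at most 1. -/
lemma cof_rs (hA0 : ∀ i, Mle 0 (A i)) (hAℓ0 : ∀ ℓ i, Mle 0 (Al ℓ i))
    (hsum : Summable A)
    (hrow : ∀ k, ∑ j, (∑' i, A i) k j ≤ 1)
    (hcompat : ∀ i, A i = ∑ ℓ ∈ Finset.range (p + 1),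
      if ℓ ≤ i then Al ℓ (i - ℓ) else 0)
    {X : Matrix (Fin m) (Fin m) ℝ} (hX : Mle 0 X) (hXr : ∀ r, ∑ c, X r c ≤ 1)
    (hAfX : ∀ ℓ, Summable fun i => Al ℓ i * X ^ i) (r : Fin m) :
    ∑ ℓ ∈ Finset.range (p + 1), ∑ c, (∑' i, Al ℓ i * X ^ i) r c ≤ 1 := by
  -- summability of the shifted row sums
  have hind : ∀ ℓ ∈ Finset.range (p + 1),
      Summable fun j => (if ℓ ≤ j then ∑ c, Al ℓ (j - ℓ) r c else 0) := by
    intro ℓ hℓ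
    refine Summable.of_nonneg_of_le (fun j => ?_) (fun j => ?_) (summable_rowsum hsum r)
    · split
      · exact Finset.sum_nonneg fun c _ => mle0 (hAℓ0 ℓ (j - ℓ)) r c
      · exact le_refl _
    · by_cases h : ℓ ≤ j
      · rw [if_pos h]
        refine Finset.sum_le_sum fun c _ => ?_
        have := ite_le_A hcompat hAℓ0 hℓ j r c
        rwa [if_pos h] at this
      · rw [if_neg h]
        exact Finset.sum_nonneg fun c _ => mle0 (hA0 j) r c
  have hrowA : ∀ ℓ ∈ Finset.range (p + 1), ∀ i : ℕ,
      ∑ c, Al ℓ i r c = (if ℓ ≤ i + ℓ then ∑ c, Al ℓ (i + ℓ - ℓ) r c else 0) := by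
    intro ℓ _ i
    rw [if_pos (Nat.le_add_left ℓ i), Nat.add_sub_cancel]
  have hsrow : ∀ ℓ ∈ Finset.range (p + 1), Summable fun i => ∑ c, Al ℓ i r c := by
    intro ℓ hℓ
    exact summable_shift ℓ (hind ℓ hℓ)
  have step2 : ∀ ℓ ∈ Finset.range (p + 1),
      ∑ c, (∑' i, Al ℓ i * X ^ i) r c ≤ ∑' i, ∑ c, Al ℓ i r c := by
    intro ℓ hℓ
    have hsℓ := hAfX ℓ
    have h1 : ∑ c, (∑' i, Al ℓ i * X ^ i) r c = ∑' i, ∑ c, (Al ℓ i * X ^ i) r c := by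
      rw [Finset.sum_congr rfl (fun c _ => tsum_entry hsℓ r c)]
      exact (Summable.tsum_finsetSum fun c _ => summable_entry hsℓ r c).symm
    rw [h1]
    refine Summable.tsum_le_tsum (fun i => rs_mul (hAℓ0 ℓ i) (mle_zero_pow hX i) (rs_pow hX hXr i) r)
      (summable_sum fun c _ => summable_entry hsℓ r c) (hsrow ℓ hℓ)
  refine le_trans (Finset.sum_le_sum step2) ?_
  -- now rearrange the double sum of row sums
  have step3 : ∑ ℓ ∈ Finset.range (p + 1), ∑' i, ∑ c, Al ℓ i r c
      = ∑' j, ∑ ℓ ∈ Finset.range (p + 1), (if ℓ ≤ j then ∑ c, Al ℓ (j - ℓ) r c else 0) := by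
    rw [Finset.sum_congr rfl (fun ℓ hℓ => tsum_shift (fun i => ∑ c, Al ℓ i r c) ℓ)]
    exact (Summable.tsum_finsetSum hind).symm
  rw [step3]
  have step4 : ∀ j : ℕ,
      ∑ ℓ ∈ Finset.range (p + 1), (if ℓ ≤ j then ∑ c, Al ℓ (j - ℓ) r c else 0)
        = ∑ c, A j r c := by
    intro j
    have h1 : ∀ ℓ ∈ Finset.range (p + 1),
        (if ℓ ≤ j then ∑ c, Al ℓ (j - ℓ) r c else 0)
          = ∑ c, (if ℓ ≤ j then Al ℓ (j - ℓ) else 0) r c := by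
      intro ℓ _
      by_cases h : ℓ ≤ j
      · rw [if_pos h]
        exact Finset.sum_congr rfl fun c _ => by rw [if_pos h]
      · rw [if_neg h]
        refine (Finset.sum_eq_zero fun c _ => by rw [if_neg h, Matrix.zero_apply]).symm
    rw [Finset.sum_congr rfl h1, Finset.sum_comm]
    refine Finset.sum_congr rfl fun c _ => ?_
    rw [hcompat j, Matrix.sum_apply]
  rw [tsum_congr step4]
  have h3 : ∑' j, ∑ c, A j r c = ∑ c, (∑' i, A i) r c := by
    rw [Finset.sum_congr rfl (fun c _ => tsum_entry hsum r c)]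
    exact Summable.tsum_finsetSum fun c _ => summable_entry hsum r c
  rw [h3]
  exact hrow r

end Stmt2

namespace Stmt2

variable {m : ℕ} {A : ℕ → Matrix (Fin m) (Fin m) ℝ}

/-- if `W k → L` monotonically with `∑' A_i (W k)^i ≤ L` then `∑' A_i L^i ≤ L`. -/
lemma tsum_pow_limit_le (hA0 : ∀ i, Mle 0 (A i))
    {W : ℕ → Matrix (Fin m) (Fin m) ℝ} {L : Matrix (Fin m) (Fin m) ℝ}
    (hW0 : ∀ k, Mle 0 (W k))
    (htend : Filter.Tendsto W Filter.atTop (nhds L))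
    (hsL : Summable fun i => A i * L ^ i)
    (hsW : ∀ k, Summable fun i => A i * (W k) ^ i)
    (hWb : ∀ k, Mle (∑' i, A i * (W k) ^ i) L) :
    Mle (∑' i, A i * L ^ i) L := by
  intro r c
  rw [tsum_entry hsL]
  refine Summable.tsum_le_of_sum_range_le (summable_entry hsL r c) fun N => ?_
  have hcont : Continuous fun M : Matrix (Fin m) (Fin m) ℝ =>
      (∑ i ∈ Finset.range N, A i * M ^ i) r c := by
    have h1 : Continuous fun M : Matrix (Fin m) (Fin m) ℝ =>
        ∑ i ∈ Finset.range N, A i * M ^ i :=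
      continuous_finset_sum _ fun i _ => continuous_const.mul (continuous_pow i)
    exact (continuous_apply c).comp ((continuous_apply r).comp h1)
  have ht : Filter.Tendsto (fun k => (∑ i ∈ Finset.range N, A i * (W k) ^ i) r c)
      Filter.atTop (nhds ((∑ i ∈ Finset.range N, A i * L ^ i) r c)) :=
    (hcont.tendsto L).comp htend
  have hb : ∀ k, (∑ i ∈ Finset.range N, A i * (W k) ^ i) r c ≤ L r c := by
    intro k
    rw [Matrix.sum_apply]
    refine le_trans (Summable.sum_le_tsum (Finset.range N)
      (fun i _ => mle0 (mle_zero_mul (hA0 i) (mle_zero_pow (hW0 k) i)) r c)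
      (summable_entry (hsW k) r c)) ?_
    rw [← tsum_entry (hsW k)]
    exact hWb k r c
  have hfin := le_of_tendsto ht (Filter.Eventually.of_forall hb)
  rw [Matrix.sum_apply] at hfin
  exact hfin

end Stmt2


open Stmt2

/-- Here `A i` denotes `A_{i-1}` of the paper, `p = q+1 ≥ 0`, and
`Aℓ ℓ' i` denotes `A_{ℓ'-1, i}` (so `ℓ = ℓ'-1` ranges over `-1,…,q`).  The
compatibility condition `A_i = ∑_{ℓ=-1}^q A_{ℓ, i-ℓ}` becomes `hcompat`. -/
theorem stmt2 (m : ℕ) (hm : 1 ≤ m) (p : ℕ)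
    (A : ℕ → Matrix (Fin m) (Fin m) ℝ)
    (Aℓ : ℕ → ℕ → Matrix (Fin m) (Fin m) ℝ)
    (hA0 : ∀ i, Mle 0 (A i)) (hAℓ0 : ∀ ℓ i, Mle 0 (Aℓ ℓ i))
    (hsum : Summable A)
    (hrow : ∀ k, ∑ j, (∑' i, A i) k j ≤ 1)
    (hcompat : ∀ i, A i = ∑ ℓ ∈ Finset.range (p + 1),
      if ℓ ≤ i then Aℓ ℓ (i - ℓ) else 0)
    (hAf : ∀ ℓ (X : Matrix (Fin m) (Fin m) ℝ), Mle 0 X → (∀ r, ∑ c, X r c ≤ 1) →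
      Summable (fun i => Aℓ ℓ i * X ^ i))
    (G : Matrix (Fin m) (Fin m) ℝ) (hG : IsMinSol A G) :
    ∃ X : ℕ → Matrix (Fin m) (Fin m) ℝ,
      X 0 = 0 ∧
      (∀ k, IsMinPolySol p (fun ℓ => ∑' i, Aℓ ℓ i * (X k) ^ i) (X (k + 1))) ∧
      (∀ k, Mle 0 (X k) ∧ Mle (X k) (X (k + 1)) ∧ ∀ r, ∑ c, X (k + 1) r c ≤ 1) ∧
      Filter.Tendsto X Filter.atTop (nhds G) := by
  
  classical
  obtain ⟨hG0, hGsum, hGeq, hGmin⟩ := hG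
  -- Part I: the row sums of G are at most 1, via the iteration Y_{j+1} = Φ(Y_j)
  let Y : ℕ → Matrix (Fin m) (Fin m) ℝ :=
    fun j => Nat.rec (motive := fun _ => Matrix (Fin m) (Fin m) ℝ) 0
      (fun _ Yj => ∑' i, A i * Yj ^ i) j
  have hYfact : ∀ j, Mle 0 (Y j) ∧ (∀ r, ∑ c, Y j r c ≤ 1) ∧ Mle (Y j) G := by
    intro j
    induction j with
    | zero =>
        refine ⟨fun a b => le_refl _, fun r => ?_, hG0⟩
        show ∑ c, (0 : Matrix (Fin m) (Fin m) ℝ) r c ≤ 1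
        simp
    | succ j ih =>
        obtain ⟨h0, hrs, hle⟩ := ih
        have hs := summable_mul_pow hA0 hsum h0 hrs
        refine ⟨tsum_mle0 hs (fun i => mle_zero_mul (hA0 i) (mle_zero_pow h0 i)),
          fun r => phi_rs hA0 hsum hrow h0 hrs r, ?_⟩
        have h1 : Mle (∑' i, A i * (Y j) ^ i) (∑' i, A i * G ^ i) :=
          tsum_mle hs hGsum fun i =>
            mle_mul (hA0 i) (fun _ _ => le_refl _) (mle_zero_pow h0 i) (mle_pow h0 hle i)
        intro a b
        exact le_trans (h1 a b) (le_of_eq (congrFun (congrFun hGeq.symm a) b))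
  have hYmono : ∀ j, Mle (Y j) (Y (j + 1)) := by
    intro j
    induction j with
    | zero => exact (hYfact 1).1
    | succ j ih =>
        have h0j := (hYfact j).1
        have hsj := summable_mul_pow hA0 hsum h0j (hYfact j).2.1
        have hsj1 := summable_mul_pow hA0 hsum (hYfact (j+1)).1 (hYfact (j+1)).2.1
        exact tsum_mle hsj hsj1 fun i =>
          mle_mul (hA0 i) (fun _ _ => le_refl _) (mle_zero_pow h0j i) (mle_pow h0j ih i)
  have hbddY : ∀ r c, BddAbove (Set.range fun j => Y j r c) := by
    intro r c
    exact ⟨G r c, by rintro x ⟨j, rfl⟩; exact (hYfact j).2.2 r c⟩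
  set L : Matrix (Fin m) (Fin m) ℝ := Matrix.of fun r c => ⨆ j, Y j r c with hLdef
  have hLt : ∀ r c, Filter.Tendsto (fun j => Y j r c) Filter.atTop (nhds (L r c)) :=
    fun r c => tendsto_atTop_ciSup (monotone_nat_of_le_succ fun j => hYmono j r c) (hbddY r c)
  have hLtm : Filter.Tendsto Y Filter.atTop (nhds L) := by
    exact tendsto_pi_nhds.mpr fun r => tendsto_pi_nhds.mpr fun c => hLt r c
  have hYleL : ∀ j, Mle (Y j) L := fun j r c => le_ciSup (hbddY r c) j
  have hL0 : Mle 0 L := mle_trans (hYfact 0).1 (hYleL 0)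
  have hLG : Mle L G := fun r c => ciSup_le fun j => (hYfact j).2.2 r c
  have hLrs : ∀ r, ∑ c, L r c ≤ 1 := by
    intro r
    have ht : Filter.Tendsto (fun j => ∑ c, Y j r c) Filter.atTop (nhds (∑ c, L r c)) :=
      tendsto_finset_sum _ fun c _ => hLt r c
    exact le_of_tendsto ht (Filter.Eventually.of_forall fun j => (hYfact j).2.1 r)
  have hsL := summable_mul_pow hA0 hsum hL0 hLrs
  have hLlePhi : Mle L (∑' i, A i * L ^ i) := by
    intro r c
    refine ciSup_le fun j => ?_
    have hsj := summable_mul_pow hA0 hsum (hYfact j).1 (hYfact j).2.1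
    have h1 : Mle (Y (j + 1)) (∑' i, A i * L ^ i) :=
      tsum_mle hsj hsL fun i =>
        mle_mul (hA0 i) (fun _ _ => le_refl _) (mle_zero_pow (hYfact j).1 i)
          (mle_pow (hYfact j).1 (hYleL j) i)
    exact le_trans (hYmono j r c) (h1 r c)
  have hPhiLle : Mle (∑' i, A i * L ^ i) L :=
    tsum_pow_limit_le hA0 (fun j => (hYfact j).1) hLtm hsL
      (fun j => summable_mul_pow hA0 hsum (hYfact j).1 (hYfact j).2.1)
      (fun j => hYleL (j + 1))
  have hLeq : L = ∑' i, A i * L ^ i := by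
    ext r c; exact le_antisymm (hLlePhi r c) (hPhiLle r c)
  have hGrs : ∀ r, ∑ c, G r c ≤ 1 := by
    have hGL : G = L := by
      ext r c
      exact le_antisymm (hGmin L hL0 hsL hLeq r c) (hLG r c)
    intro r; rw [hGL]; exact hLrs r
  -- Part II: the outer iteration
  have hGsAl : ∀ ℓ, Summable fun i => Aℓ ℓ i * G ^ i := fun ℓ => hAf ℓ G hG0 hGrs
  have hPmapG : ∑ ℓ ∈ Finset.range (p + 1), (∑' i, Aℓ ℓ i * G ^ i) * G ^ ℓ = G :=
    (rearrange hA0 hAℓ0 hsum hcompat hG0 hGrs hGsAl).trans hGeq.symm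
  let X : ℕ → Matrix (Fin m) (Fin m) ℝ :=
    fun k => Nat.rec (motive := fun _ => Matrix (Fin m) (Fin m) ℝ) 0
      (fun _ Xk => minSol p (fun ℓ => ∑' i, Aℓ ℓ i * Xk ^ i)) k
  have hC0 : ∀ (W : Matrix (Fin m) (Fin m) ℝ), Mle 0 W → (∀ r, ∑ c, W r c ≤ 1) →
      ∀ ℓ, Mle 0 (∑' i, Aℓ ℓ i * W ^ i) := fun W h0 hrs ℓ =>
    tsum_mle0 (hAf ℓ W h0 hrs) fun i => mle_zero_mul (hAℓ0 ℓ i) (mle_zero_pow h0 i)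
  have hCrow : ∀ (W : Matrix (Fin m) (Fin m) ℝ), Mle 0 W → (∀ r, ∑ c, W r c ≤ 1) →
      ∀ r, ∑ ℓ ∈ Finset.range (p + 1), ∑ c, (∑' i, Aℓ ℓ i * W ^ i) r c ≤ 1 :=
    fun W h0 hrs => cof_rs hA0 hAℓ0 hsum hrow hcompat h0 hrs (fun ℓ => hAf ℓ W h0 hrs)
  have hXfact : ∀ k, Mle 0 (X k) ∧ (∀ r, ∑ c, X k r c ≤ 1) ∧ Mle (X k) G := by
    intro k
    induction k with
    | zero =>
        refine ⟨fun a b => le_refl _, fun r => ?_, hG0⟩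
        show ∑ c, (0 : Matrix (Fin m) (Fin m) ℝ) r c ≤ 1
        simp
    | succ k ih =>
        obtain ⟨h0, hrs, hle⟩ := ih
        have hc0 := hC0 (X k) h0 hrs
        have hcrow := hCrow (X k) h0 hrs
        refine ⟨minSol_nonneg hc0 hcrow, fun r => minSol_rs hc0 hcrow r, ?_⟩
        refine minSol_le_super hc0 hG0 ?_
        have h1 : Mle (Pmap p (fun ℓ => ∑' i, Aℓ ℓ i * (X k) ^ i) G)
            (Pmap p (fun ℓ => ∑' i, Aℓ ℓ i * G ^ i) G) :=
          Pmap_monoC hc0 (fun ℓ => tsum_mle (hAf ℓ (X k) h0 hrs) (hGsAl ℓ)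
            fun i => mle_mul (hAℓ0 ℓ i) (fun _ _ => le_refl _) (mle_zero_pow h0 i)
              (mle_pow h0 hle i)) hG0
        refine mle_trans h1 ?_
        intro a b
        exact le_of_eq (congrFun (congrFun hPmapG a) b)
  have hXmono : ∀ k, Mle (X k) (X (k + 1)) := by
    intro k
    induction k with
    | zero => exact (hXfact 1).1
    | succ k ih =>
        have h0 := (hXfact k).1
        have hrs := (hXfact k).2.1
        have h0' := (hXfact (k+1)).1
        have hrs' := (hXfact (k+1)).2.1
        exact minSol_monoC (hC0 (X k) h0 hrs) (hC0 (X (k+1)) h0' hrs')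
          (hCrow (X (k+1)) h0' hrs')
          (fun ℓ => tsum_mle (hAf ℓ (X k) h0 hrs) (hAf ℓ (X (k+1)) h0' hrs')
            fun i => mle_mul (hAℓ0 ℓ i) (fun _ _ => le_refl _)
              (mle_zero_pow h0 i) (mle_pow h0 ih i))
  have hbddX : ∀ r c, BddAbove (Set.range fun k => X k r c) := by
    intro r c
    exact ⟨G r c, by rintro x ⟨k, rfl⟩; exact (hXfact k).2.2 r c⟩
  set XL : Matrix (Fin m) (Fin m) ℝ := Matrix.of fun r c => ⨆ k, X k r c with hXLdef
  have hXt : ∀ r c, Filter.Tendsto (fun k => X k r c) Filter.atTop (nhds (XL r c)) :=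
    fun r c => tendsto_atTop_ciSup (monotone_nat_of_le_succ fun k => hXmono k r c) (hbddX r c)
  have hXtm : Filter.Tendsto X Filter.atTop (nhds XL) := by
    exact tendsto_pi_nhds.mpr fun r => tendsto_pi_nhds.mpr fun c => hXt r c
  have hXleXL : ∀ k, Mle (X k) XL := fun k r c => le_ciSup (hbddX r c) k
  have hXL0 : Mle 0 XL := mle_trans (hXfact 0).1 (hXleXL 0)
  have hXLG : Mle XL G := fun r c => ciSup_le fun k => (hXfact k).2.2 r c
  have hXLrs : ∀ r, ∑ c, XL r c ≤ 1 := by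
    intro r
    have ht : Filter.Tendsto (fun k => ∑ c, X k r c) Filter.atTop (nhds (∑ c, XL r c)) :=
      tendsto_finset_sum _ fun c _ => hXt r c
    exact le_of_tendsto ht (Filter.Eventually.of_forall fun k => (hXfact k).2.1 r)
  have hsXL := summable_mul_pow hA0 hsum hXL0 hXLrs
  have hAfXL : ∀ ℓ, Summable fun i => Aℓ ℓ i * XL ^ i := fun ℓ => hAf ℓ XL hXL0 hXLrs
  have hPmapXL : ∑ ℓ ∈ Finset.range (p + 1), (∑' i, Aℓ ℓ i * XL ^ i) * XL ^ ℓ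
      = ∑' i, A i * XL ^ i :=
    rearrange hA0 hAℓ0 hsum hcompat hXL0 hXLrs hAfXL
  have hstep : ∀ k, Mle (X (k + 1)) (∑' i, A i * XL ^ i) := by
    intro k
    have h0 := (hXfact k).1
    have hrs := (hXfact k).2.1
    have hc0 := hC0 (X k) h0 hrs
    have hcrow := hCrow (X k) h0 hrs
    have e := minSol_fix hc0 hcrow
    have h1 : Mle (Pmap p (fun ℓ => ∑' i, Aℓ ℓ i * (X k) ^ i) (X (k+1)))
        (Pmap p (fun ℓ => ∑' i, Aℓ ℓ i * XL ^ i) XL) := by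
      refine mle_trans (Pmap_mono hc0 (hXfact (k+1)).1 (hXleXL (k+1))) ?_
      exact Pmap_monoC hc0 (fun ℓ => tsum_mle (hAf ℓ (X k) h0 hrs) (hAfXL ℓ)
        fun i => mle_mul (hAℓ0 ℓ i) (fun _ _ => le_refl _) (mle_zero_pow h0 i)
          (mle_pow h0 (hXleXL k) i)) hXL0
    intro a b
    calc X (k+1) a b
        = Pmap p (fun ℓ => ∑' i, Aℓ ℓ i * (X k) ^ i) (X (k+1)) a b :=
          congrFun (congrFun e a) b
      _ ≤ Pmap p (fun ℓ => ∑' i, Aℓ ℓ i * XL ^ i) XL a b := h1 a b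
      _ = (∑' i, A i * XL ^ i) a b := congrFun (congrFun hPmapXL a) b
  have hXLlePhi : Mle XL (∑' i, A i * XL ^ i) := by
    intro r c
    refine ciSup_le fun k => ?_
    cases k with
    | zero =>
        exact mle0 (tsum_mle0 hsXL
          (fun i => mle_zero_mul (hA0 i) (mle_zero_pow hXL0 i))) r c
    | succ k => exact hstep k r c
  have hWb : ∀ k, Mle (∑' i, A i * (X k) ^ i) XL := by
    intro k
    have h0 := (hXfact k).1
    have hrs := (hXfact k).2.1
    have hc0 := hC0 (X k) h0 hrs
    have hcrow := hCrow (X k) h0 hrs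
    have hre := rearrange hA0 hAℓ0 hsum hcompat h0 hrs (fun ℓ => hAf ℓ (X k) h0 hrs)
    intro a b
    calc (∑' i, A i * (X k) ^ i) a b
        = Pmap p (fun ℓ => ∑' i, Aℓ ℓ i * (X k) ^ i) (X k) a b :=
          (congrFun (congrFun hre a) b).symm
      _ ≤ Pmap p (fun ℓ => ∑' i, Aℓ ℓ i * (X k) ^ i) (X (k+1)) a b :=
          Pmap_mono hc0 h0 (hXmono k) a b
      _ = X (k+1) a b := (congrFun (congrFun (minSol_fix hc0 hcrow) a) b).symm
      _ ≤ XL a b := hXleXL (k+1) a b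
  have hPhiXLle : Mle (∑' i, A i * XL ^ i) XL :=
    tsum_pow_limit_le hA0 (fun k => (hXfact k).1) hXtm hsXL
      (fun k => summable_mul_pow hA0 hsum (hXfact k).1 (hXfact k).2.1) hWb
  have hXLeq : XL = ∑' i, A i * XL ^ i := by
    ext r c; exact le_antisymm (hXLlePhi r c) (hPhiXLle r c)
  have hGXL : G = XL := by
    ext r c
    exact le_antisymm (hGmin XL hXL0 hsXL hXLeq r c) (hXLG r c)
  refine ⟨X, rfl, ?_, ?_, ?_⟩
  · intro k
    exact minSol_isMinPolySol (hC0 (X k) (hXfact k).1 (hXfact k).2.1)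
      (hCrow (X k) (hXfact k).1 (hXfact k).2.1)
  · intro k
    exact ⟨(hXfact k).1, hXmono k, (hXfact (k+1)).2.1⟩
  · rw [hGXL]
    exact hXtm
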